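/- If A is absolutely quasi pure (i.e., a pure submodule of its quasi injective envelope), then any finite direct sum of copies of A is absolutely quasi pure. -/

import Mathlib

universe u v w

/-- The annihilator of an element `a` of a left `R`-module, as a left ideal of `R`. -/
def annihilatorOf (R : Type u) [Ring R] {A : Type v} [AddCommGroup A] [Module R A] (a : A) :
    Submodule R R := LinearMap.ker (LinearMap.toSpanSingleton R A a)

/-- `J` belongs to the filter `Ω̄(A)` of left ideals generated by annihilators of elements of
`A`, i.e. `J` contains a finite intersection of annihilators of elements of `A`. -/
def MemOmegaBar (R : Type u) [Ring R] (A : Type v) [AddCommGroup A] [Module R A]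
    (J : Submodule R R) : Prop :=
  ∃ s : Finset A, (⨅ a ∈ s, annihilatorOf R a) ≤ J

/-- `A` is a self pure submodule of `B` (along the injection `i`): every map `f : L → A` from a
finitely generated left ideal with `ker f ∈ Ω̄(A)` which extends to a map `R → B` also extends
to a map `R → A`. -/
def IsSelfPureIn (R : Type u) [Ring R] {A : Type v} {B : Type w} [AddCommGroup A] [Module R A]
    [AddCommGroup B] [Module R B] (i : A →ₗ[R] B) : Prop :=
  ∀ L : Submodule R R, L.FG → ∀ f : L →ₗ[R] A,
    MemOmegaBar R A ((LinearMap.ker f).map L.subtype) →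
    (∃ g : R →ₗ[R] B, ∀ x : L, g x = i (f x)) →
    ∃ h : R →ₗ[R] A, ∀ x : L, h x = f x

/-- `A` is absolutely self pure: every map `f : L → A` from a finitely generated left ideal of
`R` with `ker f ∈ Ω̄(A)` extends to a map `R → A`. -/
def AbsolutelySelfPure (R : Type u) [Ring R] (A : Type v) [AddCommGroup A] [Module R A] : Prop :=
  ∀ L : Submodule R R, L.FG → ∀ f : L →ₗ[R] A,
    MemOmegaBar R A ((LinearMap.ker f).map L.subtype) →
    ∃ h : R →ₗ[R] A, ∀ x : L, h x = f x

/-- `Q` is quasi injective: every homomorphism from a submodule of `Q` into `Q` extends to an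
endomorphism of `Q`. -/
def IsQuasiInjective (R : Type u) [Ring R] (Q : Type v) [AddCommGroup Q] [Module R Q] : Prop :=
  ∀ (N : Submodule R Q) (f : N →ₗ[R] Q), ∃ g : Q →ₗ[R] Q, ∀ x : N, g x = f x

/-- `A` is a pure submodule of `B` (along `i`): for every finitely generated submodule `K` of a
finite free module and every commuting square, a map `F → A` makes the upper triangle commute. -/
def IsPureIn (R : Type u) [Ring R] {A : Type v} {B : Type w} [AddCommGroup A] [Module R A]
    [AddCommGroup B] [Module R B] (i : A →ₗ[R] B) : Prop :=
  ∀ (n : ℕ) (K : Submodule R (Fin n → R)), K.FG →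
    ∀ (f : K →ₗ[R] A) (g : (Fin n → R) →ₗ[R] B),
      (∀ x : K, g x = i (f x)) →
      ∃ h : (Fin n → R) →ₗ[R] A, ∀ x : K, h x = f x

/-- `A` is absolutely pure: every map into `A` from a finitely generated submodule of a finite
free module extends to the free module. -/
def IsAbsolutelyPure (R : Type u) [Ring R] (A : Type v) [AddCommGroup A] [Module R A] : Prop :=
  ∀ (n : ℕ) (K : Submodule R (Fin n → R)), K.FG →
    ∀ f : K →ₗ[R] A, ∃ g : (Fin n → R) →ₗ[R] A, ∀ x : K, g x = f x

/-- `A` is absolutely quasi pure: `A` embeds as a pure submodule of some quasi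
injective module (equivalently, `A` is pure in its quasi injective envelope). -/
def AbsolutelyQuasiPure (R : Type u) [Ring R] (A : Type v) [AddCommGroup A] [Module R A] :
    Prop :=
  ∃ (Q : Type (max u v)) (_ : AddCommGroup Q) (_ : Module R Q) (i : A →ₗ[R] Q),
    Function.Injective i ∧ IsQuasiInjective R Q ∧ IsPureIn R i

section Aux

variable {R : Type u} [Ring R]

/-- `M` is `N`-injective. -/
def RelInj (R : Type u) [Ring R] (M N : Type*) [AddCommGroup M] [Module R M]
    [AddCommGroup N] [Module R N] : Prop :=
  ∀ (K : Submodule R N) (f : K →ₗ[R] M), ∃ g : N →ₗ[R] M, ∀ x : K, g x = f x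

theorem relInj_congr {M N N' : Type*} [AddCommGroup M] [Module R M] [AddCommGroup N]
    [Module R N] [AddCommGroup N'] [Module R N'] (e : N ≃ₗ[R] N') (h : RelInj R M N) :
    RelInj R M N' := by
  intro K f
  set K0 : Submodule R N := K.comap (e : N →ₗ[R] N') with hK0
  set e0 : K0 →ₗ[R] K := (e : N →ₗ[R] N').restrict (fun x hx => hx) with he0
  obtain ⟨g0, hg0⟩ := h K0 (f.comp e0)
  refine ⟨g0.comp (e.symm : N' ≃ₗ[R] N).toLinearMap, fun x => ?_⟩
  have hmem : e.symm (x : N') ∈ K0 := by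
    simp only [hK0, Submodule.mem_comap, LinearEquiv.coe_coe, LinearEquiv.apply_symm_apply]
    exact x.2
  have h1 := hg0 ⟨e.symm (x : N'), hmem⟩
  have h2 : e0 ⟨e.symm (x : N'), hmem⟩ = x := by
    apply Subtype.ext
    simp [he0, LinearMap.restrict_apply]
  simp only [LinearMap.comp_apply, h2] at h1
  simpa using h1

theorem relInj_prod {M N₁ N₂ : Type*} [AddCommGroup M] [Module R M] [AddCommGroup N₁]
    [Module R N₁] [AddCommGroup N₂] [Module R N₂]
    (h₁ : RelInj R M N₁) (h₂ : RelInj R M N₂) : RelInj R M (N₁ × N₂) := by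
  intro K f
  set K₁ : Submodule R N₁ := K.comap (LinearMap.inl R N₁ N₂) with hK₁
  set e₁ : K₁ →ₗ[R] K := (LinearMap.inl R N₁ N₂).restrict (fun x hx => hx) with he₁
  obtain ⟨g₁, hg₁⟩ := h₁ K₁ (f.comp e₁)
  set p : K →ₗ[R] N₂ := (LinearMap.snd R N₁ N₂).comp K.subtype with hp
  set f' : K →ₗ[R] M := f - g₁.comp ((LinearMap.fst R N₁ N₂).comp K.subtype) with hf'
  have hker : LinearMap.ker p ≤ LinearMap.ker f' := by
    intro x hx
    have hx2 : (x : N₁ × N₂).2 = 0 := hx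
    have hmem : (x : N₁ × N₂).1 ∈ K₁ := by
      simp only [hK₁, Submodule.mem_comap, LinearMap.inl_apply]
      have : ((x : N₁ × N₂).1, (0 : N₂)) = (x : N₁ × N₂) := by
        rw [← hx2]
      rw [this]; exact x.2
    have hx' : e₁ ⟨(x : N₁ × N₂).1, hmem⟩ = x := by
      apply Subtype.ext
      apply Prod.ext
      · simp [he₁, LinearMap.restrict_apply]
      · simp [he₁, LinearMap.restrict_apply, hx2.symm]
    have := hg₁ ⟨(x : N₁ × N₂).1, hmem⟩
    rw [LinearMap.comp_apply, hx'] at this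
    simp only [LinearMap.mem_ker, hf', LinearMap.sub_apply, LinearMap.comp_apply]
    rw [sub_eq_zero]
    exact this.symm
  set q := p.quotKerEquivRange with hq
  set φ : LinearMap.range p →ₗ[R] M :=
    ((LinearMap.ker p).liftQ f' hker).comp (q.symm : LinearMap.range p ≃ₗ[R] _).toLinearMap
    with hφ
  obtain ⟨g₂, hg₂⟩ := h₂ (LinearMap.range p) φ
  refine ⟨g₁.comp (LinearMap.fst R N₁ N₂) + g₂.comp (LinearMap.snd R N₁ N₂), fun x => ?_⟩
  have hmem : p x ∈ LinearMap.range p := LinearMap.mem_range_self p x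
  have key : g₂ (p x) = f' x := by
    have h1 := hg₂ ⟨p x, hmem⟩
    have h2 : (⟨p x, hmem⟩ : LinearMap.range p) = q (Submodule.Quotient.mk x) := by
      apply Subtype.ext
      simp [hq, LinearMap.quotKerEquivRange_apply_mk]
    rw [h2] at h1
    simp [hφ, Submodule.liftQ_apply] at h1
    rw [← h2] at h1
    exact h1
  have hpx : p x = (x : N₁ × N₂).2 := rfl
  rw [hpx] at key
  simp only [LinearMap.add_apply, LinearMap.comp_apply, LinearMap.fst_apply,
    LinearMap.snd_apply, key, hf', LinearMap.sub_apply, LinearMap.comp_apply,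
    Submodule.subtype_apply]
  abel

/-- The linear equivalence `(Fin (n+1) → M) ≃ₗ (Fin n → M) × M`. -/
def finSuccLEquiv (R : Type u) [Ring R] (M : Type*) [AddCommGroup M] [Module R M] (n : ℕ) :
    ((Fin n → M) × M) ≃ₗ[R] (Fin (n + 1) → M) where
  toFun x := Fin.snoc x.1 x.2
  invFun f := (fun i => f i.castSucc, f (Fin.last n))
  map_add' x y := by
    funext i
    refine Fin.lastCases ?_ (fun j => ?_) i <;> simp [Fin.snoc_last, Fin.snoc_castSucc]
  map_smul' r x := by
    funext i
    refine Fin.lastCases ?_ (fun j => ?_) i <;> simp [Fin.snoc_last, Fin.snoc_castSucc]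
  left_inv x := by simp
  right_inv f := by
    funext i
    refine Fin.lastCases ?_ (fun j => ?_) i
    · simp
    · simp

theorem relInj_pi_self {Q : Type*} [AddCommGroup Q] [Module R Q]
    (hQ : IsQuasiInjective R Q) (n : ℕ) : RelInj R Q (Fin n → Q) := by
  induction n with
  | zero =>
    intro K f
    refine ⟨0, fun x => ?_⟩
    have hx : x = 0 := Subtype.ext (funext fun i => i.elim0)
    simp [hx]
  | succ n ih =>
    exact relInj_congr (finSuccLEquiv R Q n) (relInj_prod ih hQ)

theorem isQuasiInjective_pi {Q : Type*} [AddCommGroup Q] [Module R Q]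
    (hQ : IsQuasiInjective R Q) (n : ℕ) : IsQuasiInjective R (Fin n → Q) := by
  intro K f
  choose g hg using fun i => relInj_pi_self hQ n K ((LinearMap.proj i).comp f)
  refine ⟨LinearMap.pi g, fun x => funext fun i => ?_⟩
  simpa using hg i x

end Aux

theorem absolutelyQuasiPure_finite_directSum {R : Type u} [Ring R] (A : Type v)
    [AddCommGroup A] [Module R A] (h : AbsolutelyQuasiPure R A) (n : ℕ) :
    AbsolutelyQuasiPure R (Fin n → A) := by
  obtain ⟨Q, _, _, i, hinj, hqi, hpure⟩ := h
  refine ⟨Fin n → Q, inferInstance, inferInstance,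
    LinearMap.pi (fun j => i.comp (LinearMap.proj j)), ?_, isQuasiInjective_pi hqi n, ?_⟩
  · intro a b hab
    funext j
    exact hinj (congrFun hab j)
  · intro m K hK f g hfg
    choose hh hhh using fun j => hpure m K hK ((LinearMap.proj j).comp f)
      ((LinearMap.proj j).comp g) (fun x => by simpa using congrFun (hfg x) j)
    refine ⟨LinearMap.pi hh, fun x => funext fun j => ?_⟩
    simpa using hhh j x
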